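/- Let (R, m) be a commutative noetherian local ring. Then R is excellent as a module over itself (i.e. I = γ_I(R) for every ideal I of R) if and only if R is a quasi-Frobenius ring, i.e. R is artinian and R is injective as a module over itself. -/

import Mathlib

universe u

open Submodule

namespace LindoAux

section Flen

variable (R : Type u) [Ring R]

/-- Covers transport along `map A.subtype`. -/
theorem covBy_map_subtype {M : Type u} [AddCommGroup M] [Module R M] (A : Submodule R M)
    {N₁ N₂ : Submodule R A} (h : N₁ ⋖ N₂) :
    N₁.map A.subtype ⋖ N₂.map A.subtype := by
  have inj : Function.Injective A.subtype := A.injective_subtype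
  have hmaplt : ∀ P Q : Submodule R A, P < Q → P.map A.subtype < Q.map A.subtype := by
    intro P Q hPQ
    exact lt_of_le_of_ne (Submodule.map_mono hPQ.le)
      (fun e => hPQ.ne (Submodule.map_injective_of_injective inj e))
  refine ⟨hmaplt _ _ h.lt, ?_⟩
  intro C hC1 hC2
  have hCA : C ≤ A := le_trans hC2.le (Submodule.map_subtype_le A N₂)
  have hmc : (C.comap A.subtype).map A.subtype = C :=
    Submodule.map_comap_eq_self (by rw [Submodule.range_subtype]; exact hCA)
  have h1 : N₁ < C.comap A.subtype := by
    refine lt_of_le_of_ne ?_ ?_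
    · rw [← Submodule.map_le_map_iff_of_injective inj, hmc]; exact hC1.le
    · rintro rfl; rw [hmc] at hC1; exact hC1.ne rfl
  have h2 : C.comap A.subtype < N₂ := by
    refine lt_of_le_of_ne ?_ ?_
    · rw [← Submodule.map_le_map_iff_of_injective inj, hmc]; exact hC2.le
    · rintro rfl; rw [hmc] at hC2; exact hC2.ne rfl
  exact h.2 h1 h2

/-- Covers transport along `comap A.mkQ`. -/
theorem covBy_comap_mkQ {M : Type u} [AddCommGroup M] [Module R M] (A : Submodule R M)
    {Q₁ Q₂ : Submodule R (M ⧸ A)} (h : Q₁ ⋖ Q₂) :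
    Q₁.comap A.mkQ ⋖ Q₂.comap A.mkQ := by
  have surj : Function.Surjective A.mkQ := Submodule.mkQ_surjective A
  have hlt : ∀ P Q : Submodule R (M ⧸ A), P < Q → P.comap A.mkQ < Q.comap A.mkQ := by
    intro P Q hPQ
    exact lt_of_le_of_ne ((Submodule.comap_le_comap_iff_of_surjective surj).mpr hPQ.le)
      (fun e => hPQ.ne (Submodule.comap_injective_of_surjective surj e))
  refine ⟨hlt _ _ h.lt, ?_⟩
  intro C hC1 hC2
  have hAC : A ≤ C := by
    refine le_trans ?_ hC1.le
    intro x hx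
    simp only [Submodule.mem_comap]
    have : A.mkQ x = 0 := by
      rw [← Submodule.mem_bot (R := R)]
      exact (Submodule.Quotient.mk_eq_zero A).mpr hx
    rw [this]; exact Q₁.zero_mem
  have hmc : (C.map A.mkQ).comap A.mkQ = C := by
    rw [Submodule.comap_map_mkQ, sup_eq_right.mpr hAC]
  have h1 : Q₁ < C.map A.mkQ := by
    refine lt_of_le_of_ne ?_ ?_
    · rw [← Submodule.comap_le_comap_iff_of_surjective surj, hmc]; exact hC1.le
    · rintro rfl; rw [hmc] at hC1; exact hC1.ne rfl
  have h2 : C.map A.mkQ < Q₂ := by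
    refine lt_of_le_of_ne ?_ ?_
    · rw [← Submodule.comap_le_comap_iff_of_surjective surj, hmc]; exact hC2.le
    · rintro rfl; rw [hmc] at hC2; exact hC2.ne rfl
  exact h.2 h1 h2

/-- Finite length of a module (over an ambient noetherian+artinian situation). -/
noncomputable def flen (M : Type u) [AddCommGroup M] [Module R M]
    [IsNoetherian R M] [IsArtinian R M] : ℕ :=
  (exists_compositionSeries_of_isNoetherian_isArtinian R M).choose.length

theorem flen_eq {M : Type u} [AddCommGroup M] [Module R M] [IsNoetherian R M] [IsArtinian R M]
    (s : CompositionSeries (Submodule R M)) (h1 : s.head = ⊥) (h2 : s.last = ⊤) :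
    flen R M = s.length := by
  have spec := (exists_compositionSeries_of_isNoetherian_isArtinian R M).choose_spec
  exact (CompositionSeries.jordan_holder _ s (by rw [spec.1, h1]) (by rw [spec.2, h2])).length_eq

theorem flen_add {M : Type u} [AddCommGroup M] [Module R M] [IsNoetherian R M] [IsArtinian R M]
    (A : Submodule R M) : flen R M = flen R A + flen R (M ⧸ A) := by
  have sA := (exists_compositionSeries_of_isNoetherian_isArtinian R A).choose_spec
  have sQ := (exists_compositionSeries_of_isNoetherian_isArtinian R (M ⧸ A)).choose_spec
  set s := (exists_compositionSeries_of_isNoetherian_isArtinian R A).choose with hs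
  set t := (exists_compositionSeries_of_isNoetherian_isArtinian R (M ⧸ A)).choose with ht
  let s' : CompositionSeries (Submodule R M) :=
    ⟨s.length, fun i => (s i).map A.subtype, fun i => covBy_map_subtype R A (s.step i)⟩
  let t' : CompositionSeries (Submodule R M) :=
    ⟨t.length, fun i => (t i).comap A.mkQ, fun i => covBy_comap_mkQ R A (t.step i)⟩
  have hconn : s'.last = t'.head := by
    show (s.last).map A.subtype = (t.head).comap A.mkQ
    rw [sA.2, sQ.1, Submodule.map_subtype_top, Submodule.comap_bot, Submodule.ker_mkQ]
  have := flen_eq R (s'.smash t' hconn) ?_ ?_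
  · rw [this]
    rfl
  · rw [RelSeries.head_smash]
    show (s.head).map A.subtype = ⊥
    rw [sA.1, Submodule.map_bot]
  · rw [RelSeries.last_smash]
    show (t.last).comap A.mkQ = ⊤
    rw [sQ.2, Submodule.comap_top]

theorem flen_congr {M N : Type u} [AddCommGroup M] [Module R M] [IsNoetherian R M]
    [IsArtinian R M] [AddCommGroup N] [Module R N] [IsNoetherian R N] [IsArtinian R N]
    (e : M ≃ₗ[R] N) : flen R M = flen R N := by
  have sM := (exists_compositionSeries_of_isNoetherian_isArtinian R M).choose_spec
  set s := (exists_compositionSeries_of_isNoetherian_isArtinian R M).choose with hs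
  let f : Submodule R M ≃o Submodule R N := Submodule.orderIsoMapComap e
  have hcov : ∀ {a b : Submodule R M}, a ⋖ b → f a ⋖ f b := by
    intro a b hab
    refine ⟨f.lt_iff_lt.mpr hab.lt, ?_⟩
    intro c h1 h2
    have e1 : f a < f (f.symm c) := by rwa [f.apply_symm_apply]
    have e2 : f (f.symm c) < f b := by rwa [f.apply_symm_apply]
    exact hab.2 (f.lt_iff_lt.mp e1) (f.lt_iff_lt.mp e2)
  let s' : CompositionSeries (Submodule R N) :=
    ⟨s.length, fun i => f (s i), fun i => hcov (s.step i)⟩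
  have : flen R N = s'.length := by
    refine flen_eq R s' ?_ ?_
    · show f s.head = ⊥; rw [sM.1, f.map_bot]
    · show f s.last = ⊤; rw [sM.2, f.map_top]
  rw [this]; rfl

theorem flen_eq_zero_of_subsingleton {M : Type u} [AddCommGroup M] [Module R M]
    [IsNoetherian R M] [IsArtinian R M] (h : Subsingleton M) : flen R M = 0 := by
  have : (⊥ : Submodule R M) = ⊤ := Subsingleton.elim _ _
  have := flen_eq R (RelSeries.singleton _ (⊥ : Submodule R M)) rfl (by simpa using this)
  simpa using this

theorem subsingleton_of_flen_eq_zero {M : Type u} [AddCommGroup M] [Module R M]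
    [IsNoetherian R M] [IsArtinian R M] (h : flen R M = 0) : Subsingleton M := by
  have spec := (exists_compositionSeries_of_isNoetherian_isArtinian R M).choose_spec
  set s := (exists_compositionSeries_of_isNoetherian_isArtinian R M).choose with hs
  have hbt : (⊥ : Submodule R M) = ⊤ := by
    have h0 : s.length = 0 := h
    have : s.head = s.last := by
      show s.toFun 0 = s.toFun (Fin.last s.length)
      congr 1
      rw [h0]; rfl
    rw [← spec.1, ← spec.2]; exact this
  constructor
  intro a b
  have ha : a ∈ (⊥ : Submodule R M) := by rw [hbt]; trivial
  have hb : b ∈ (⊥ : Submodule R M) := by rw [hbt]; trivial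
  simp only [Submodule.mem_bot] at ha hb
  rw [ha, hb]

theorem flen_eq_one {M : Type u} [AddCommGroup M] [Module R M]
    [IsNoetherian R M] [IsArtinian R M] (h1 : ∃ x : M, x ≠ 0)
    (h2 : ∀ N : Submodule R M, N = ⊥ ∨ N = ⊤) : flen R M = 1 := by
  have hbt : (⊥ : Submodule R M) ≠ ⊤ := by
    obtain ⟨x, hx⟩ := h1
    intro e
    have : x ∈ (⊥ : Submodule R M) := by rw [e]; trivial
    exact hx (by simpa using this)
  have hcov : (⊥ : Submodule R M) ⋖ ⊤ := by
    refine ⟨lt_of_le_of_ne bot_le hbt, ?_⟩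
    intro c hc1 hc2
    rcases h2 c with rfl | rfl
    · exact hc1.ne rfl
    · exact hc2.ne rfl
  let s : CompositionSeries (Submodule R M) :=
    ⟨1, ![⊥, ⊤], by
      intro i
      fin_cases i
      exact hcov⟩
  have := flen_eq R s (by rfl) (by rfl)
  simpa using this

theorem flen_submodule_le {M : Type u} [AddCommGroup M] [Module R M]
    [IsNoetherian R M] [IsArtinian R M] (N : Submodule R M) : flen R N ≤ flen R M := by
  rw [flen_add R N]; omega

theorem flen_le_of_injective {M N : Type u} [AddCommGroup M] [Module R M] [IsNoetherian R M]
    [IsArtinian R M] [AddCommGroup N] [Module R N] [IsNoetherian R N] [IsArtinian R N]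
    (g : M →ₗ[R] N) (hg : Function.Injective g) : flen R M ≤ flen R N := by
  have : flen R M = flen R (LinearMap.range g) :=
    flen_congr R (LinearEquiv.ofInjective g hg)
  rw [this]
  exact flen_submodule_le R _

theorem eq_top_of_flen_le {M : Type u} [AddCommGroup M] [Module R M]
    [IsNoetherian R M] [IsArtinian R M] (N : Submodule R M) (h : flen R M ≤ flen R N) :
    N = ⊤ := by
  have hadd := flen_add R N
  have h0 : flen R (M ⧸ N) = 0 := by omega
  have := subsingleton_of_flen_eq_zero R h0
  exact Submodule.Quotient.subsingleton_iff.mp this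

end Flen


section Ring

open IsLocalRing

variable {R : Type u} [CommRing R]

theorem isArtinian_of_subsingleton' (M : Type u) [AddCommGroup M] [Module R M]
    (h : Subsingleton M) : IsArtinian R M := by
  have : Subsingleton (Submodule R M) :=
    ⟨fun a b => by ext x; simp [Subsingleton.elim x (0 : M)]⟩
  constructor
  refine ⟨fun a => Acc.intro a fun c hc => absurd (Subsingleton.elim c a ▸ hc) (lt_irrefl a)⟩

theorem isArtinian_of_bot_or_top {M : Type u} [AddCommGroup M] [Module R M]
    (hall : ∀ N : Submodule R M, N = ⊥ ∨ N = ⊤) : IsArtinian R M := by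
  have accbot : Acc (· < ·) (⊥ : Submodule R M) :=
    Acc.intro _ (fun c hc => absurd hc (by simp))
  constructor
  refine ⟨fun N => Acc.intro N fun c hc => ?_⟩
  rcases hall c with rfl | rfl
  · exact accbot
  · exact absurd hc (not_top_lt)

theorem mem_span_of_ann_le
    (hT : ∀ I : Ideal R, (⨆ f : I →ₗ[R] R, LinearMap.range f) = I)
    (x a : R) (h : ∀ r : R, r * x = 0 → r * a = 0) : a ∈ Ideal.span {x} := by
  set T := Ideal.torsionOf R R x with hTdef
  have hker : T ≤ LinearMap.ker (LinearMap.toSpanSingleton R R a) := by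
    intro r hr
    have hrx : r * x = 0 := by
      have := (Ideal.mem_torsionOf_iff x r).mp hr
      simpa [smul_eq_mul] using this
    simp only [LinearMap.mem_ker, LinearMap.toSpanSingleton_apply, smul_eq_mul]
    exact h r hrx
  let g : (R ⧸ T) →ₗ[R] R := Submodule.liftQ T (LinearMap.toSpanSingleton R R a) hker
  let e : (R ⧸ T) ≃ₗ[R] ↥(Ideal.span ({x} : Set R)) :=
    Ideal.quotTorsionOfEquivSpanSingleton R R x
  let f : ↥(Ideal.span ({x} : Set R)) →ₗ[R] R := g ∘ₗ (e.symm : _ →ₗ[R] _)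
  have hxmem : x ∈ Ideal.span ({x} : Set R) := Ideal.subset_span rfl
  have hsymm : e.symm ⟨x, hxmem⟩ = Submodule.Quotient.mk (1 : R) := by
    rw [LinearEquiv.symm_apply_eq]
    show (⟨x, hxmem⟩ : ↥(Ideal.span ({x} : Set R))) =
      Ideal.quotTorsionOfEquivSpanSingleton R R x (Submodule.Quotient.mk (1 : R))
    rw [Ideal.quotTorsionOfEquivSpanSingleton_apply_mk x (1 : R)]
    exact (one_smul R _).symm
  have hfx : f ⟨x, hxmem⟩ = a := by
    show g (e.symm ⟨x, hxmem⟩) = a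
    rw [hsymm]
    show (LinearMap.toSpanSingleton R R a) 1 = a
    simp
  have : a ∈ (⨆ f : ↥(Ideal.span ({x} : Set R)) →ₗ[R] R, LinearMap.range f) := by
    refine Submodule.mem_iSup_of_mem f ?_
    exact ⟨⟨x, hxmem⟩, hfx⟩
  rwa [hT (Ideal.span {x})] at this

theorem pow_eq_zero_of_mem_max [IsNoetherianRing R] [IsLocalRing R]
    (hT : ∀ I : Ideal R, (⨆ f : I →ₗ[R] R, LinearMap.range f) = I)
    {x : R} (hx : x ∈ maximalIdeal R) : ∃ n, x ^ n = 0 := by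
  have hmono : Monotone (fun k => Ideal.torsionOf R R (x ^ k)) := by
    apply monotone_nat_of_le_succ
    intro k r hr
    have hrx : r * x ^ k = 0 := by simpa [smul_eq_mul] using (Ideal.mem_torsionOf_iff _ r).mp hr
    refine (Ideal.mem_torsionOf_iff _ r).mpr ?_
    show r • x ^ (k + 1) = 0
    rw [smul_eq_mul, pow_succ, ← mul_assoc, hrx, zero_mul]
  obtain ⟨n, hn⟩ := (monotone_stabilizes_iff_noetherian.mpr inferInstance)
    ⟨fun k => Ideal.torsionOf R R (x ^ k), hmono⟩
  have h1 : x ^ n ∈ Ideal.span {x ^ (n + 1)} := by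
    refine mem_span_of_ann_le hT _ _ (fun r hr => ?_)
    have hmem : r ∈ Ideal.torsionOf R R (x ^ (n + 1)) :=
      (Ideal.mem_torsionOf_iff _ r).mpr (by simpa [smul_eq_mul] using hr)
    have heq := hn (n + 1) (by omega)
    simp only [OrderHom.coe_mk] at heq
    rw [← heq] at hmem
    simpa [smul_eq_mul] using (Ideal.mem_torsionOf_iff _ r).mp hmem
  obtain ⟨c, hc⟩ := Ideal.mem_span_singleton'.mp h1
  have hu : IsUnit (1 - c * x) :=
    IsLocalRing.isUnit_one_sub_self_of_mem_nonunits _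
      ((IsLocalRing.mem_maximalIdeal _).mp (Ideal.mul_mem_left _ c hx))
  refine ⟨n, ?_⟩
  have hz : x ^ n * (1 - c * x) = 0 := by
    have : x ^ n * (1 - c * x) = x ^ n - c * x ^ (n + 1) := by ring
    rw [this, hc, sub_self]
  obtain ⟨u, hu⟩ := hu
  rw [← hu] at hz
  exact (Units.mul_left_eq_zero u).mp hz

theorem max_pow_eq_bot [IsNoetherianRing R] [IsLocalRing R]
    (hT : ∀ I : Ideal R, (⨆ f : I →ₗ[R] R, LinearMap.range f) = I) :
    ∃ k, (maximalIdeal R) ^ k = ⊥ := by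
  obtain ⟨k, hk⟩ := IsNoetherianRing.isNilpotent_nilradical R
  refine ⟨k, le_bot_iff.mp ?_⟩
  have hle : maximalIdeal R ≤ nilradical R := by
    intro x hx
    obtain ⟨n, hn⟩ := pow_eq_zero_of_mem_max hT hx
    exact mem_nilradical.mpr ⟨n, hn⟩
  calc (maximalIdeal R) ^ k ≤ (nilradical R) ^ k := Ideal.pow_right_mono hle k
    _ = ⊥ := hk

theorem isArtinian_cyclic_max [IsLocalRing R] {M : Type u} [AddCommGroup M] [Module R M]
    (x : M) (hx : ∀ c ∈ maximalIdeal R, c • x = 0) : IsArtinian R ↥(R ∙ x) := by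
  refine isArtinian_of_bot_or_top (fun N => ?_)
  rcases eq_or_ne N ⊥ with h | h
  · exact Or.inl h
  right
  obtain ⟨w, hwN, hw0⟩ := Submodule.exists_mem_ne_zero_of_ne_bot h
  obtain ⟨r, hr⟩ := Submodule.mem_span_singleton.mp w.2
  have hru : IsUnit r := by
    by_contra hnr
    refine hw0 (Subtype.ext ?_)
    show (↑w : M) = 0
    rw [← hr, hx r ((IsLocalRing.mem_maximalIdeal r).mpr hnr)]
  obtain ⟨u, rfl⟩ := hru
  rw [eq_top_iff]
  intro v _
  obtain ⟨s, hs⟩ := Submodule.mem_span_singleton.mp v.2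
  have hxw : (⟨x, Submodule.mem_span_singleton_self x⟩ : ↥(R ∙ x)) = (↑u⁻¹ : R) • w := by
    apply Subtype.ext
    show x = (↑u⁻¹ : R) • (↑w : M)
    rw [← hr, smul_smul]
    simp
  have hv : v = (s * ↑u⁻¹) • w := by
    apply Subtype.ext
    show (↑v : M) = (s * ↑u⁻¹) • (↑w : M)
    rw [← hs, ← hr, smul_smul, mul_assoc, Units.inv_mul, mul_one]
  rw [hv]
  exact N.smul_mem _ hwN

theorem isArtinian_of_killed_by_max [IsLocalRing R] :
    ∀ (n : ℕ) (M : Type u) [AddCommGroup M] [Module R M] (s : Finset M),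
      s.card ≤ n → Submodule.span R (↑s : Set M) = ⊤ →
      (∀ c ∈ maximalIdeal R, ∀ m : M, c • m = (0 : M)) → IsArtinian R M := by
  intro n
  induction n with
  | zero =>
    intro M _ _ s hcard hspan _
    have hs : s = ∅ := Finset.card_eq_zero.mp (Nat.le_zero.mp hcard)
    rw [hs] at hspan
    simp only [Finset.coe_empty, Submodule.span_empty] at hspan
    refine isArtinian_of_subsingleton' M ?_
    constructor
    intro a b
    have ha : a ∈ (⊥ : Submodule R M) := by rw [hspan]; trivial
    have hb : b ∈ (⊥ : Submodule R M) := by rw [hspan]; trivial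
    simp only [Submodule.mem_bot] at ha hb
    rw [ha, hb]
  | succ n ih =>
    intro M _ _ s hcard hspan hkill
    classical
    rcases s.eq_empty_or_nonempty with rfl | ⟨x, hxs⟩
    · simp only [Finset.coe_empty, Submodule.span_empty] at hspan
      refine isArtinian_of_subsingleton' M ?_
      constructor
      intro a b
      have ha : a ∈ (⊥ : Submodule R M) := by rw [hspan]; trivial
      have hb : b ∈ (⊥ : Submodule R M) := by rw [hspan]; trivial
      simp only [Submodule.mem_bot] at ha hb
      rw [ha, hb]
    set N : Submodule R M := R ∙ x with hN
    have hart1 : IsArtinian R ↥N := isArtinian_cyclic_max x (fun c hc => hkill c hc x)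
    have hart2 : IsArtinian R (M ⧸ N) := by
      refine ih (M ⧸ N) ((s.erase x).image N.mkQ) ?_ ?_ ?_
      · calc ((s.erase x).image N.mkQ).card ≤ (s.erase x).card := Finset.card_image_le
          _ = s.card - 1 := Finset.card_erase_of_mem hxs
          _ ≤ n := by omega
      · have himg : Submodule.span R (N.mkQ '' (↑s : Set M)) = ⊤ := by
          rw [Submodule.span_image, hspan, Submodule.map_top, Submodule.range_mkQ]
        have hsins : (↑s : Set M) = insert x (↑(s.erase x) : Set M) := by
          rw [← Finset.coe_insert, Finset.insert_erase hxs]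
        rw [hsins] at himg
        rw [Set.image_insert_eq] at himg
        have hmkx : N.mkQ x = 0 := by
          rw [Submodule.mkQ_apply]
          exact (Submodule.Quotient.mk_eq_zero N).mpr (Submodule.mem_span_singleton_self x)
        rw [hmkx, Submodule.span_insert_zero] at himg
        rw [Finset.coe_image]
        exact himg
      · intro c hc q
        obtain ⟨m, rfl⟩ := Submodule.mkQ_surjective N q
        show c • Submodule.Quotient.mk m = 0
        rw [← Submodule.Quotient.mk_smul, hkill c hc m]
        rfl
    exact (isArtinian_iff_submodule_quotient N).mpr ⟨hart1, hart2⟩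

theorem isArtinian_of_pow_smul [IsLocalRing R] [IsNoetherianRing R] :
    ∀ (n : ℕ) (M : Type u) [AddCommGroup M] [Module R M] [Module.Finite R M],
      ((maximalIdeal R) ^ n) • (⊤ : Submodule R M) = ⊥ → IsArtinian R M := by
  intro n
  induction n with
  | zero =>
    intro M _ _ _ h
    rw [pow_zero, Ideal.one_eq_top, Submodule.top_smul] at h
    refine isArtinian_of_subsingleton' M ?_
    constructor
    intro a b
    have ha : a ∈ (⊥ : Submodule R M) := by rw [← h]; trivial
    have hb : b ∈ (⊥ : Submodule R M) := by rw [← h]; trivial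
    simp only [Submodule.mem_bot] at ha hb
    rw [ha, hb]
  | succ n ih =>
    intro M _ _ _ h
    classical
    have hnoeth : IsNoetherian R M := isNoetherian_of_isNoetherianRing_of_finite R M
    set N : Submodule R M := (maximalIdeal R) • ⊤ with hNdef
    have hart2 : IsArtinian R (M ⧸ N) := by
      obtain ⟨s, hs⟩ := Module.Finite.fg_top (R := R) (M := M)
      refine isArtinian_of_killed_by_max (s.image N.mkQ).card (M ⧸ N) (s.image N.mkQ)
        le_rfl ?_ ?_
      · rw [Finset.coe_image, Submodule.span_image, hs, Submodule.map_top, Submodule.range_mkQ]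
      · intro c hc q
        obtain ⟨m, rfl⟩ := Submodule.mkQ_surjective N q
        show c • Submodule.Quotient.mk m = 0
        rw [← Submodule.Quotient.mk_smul]
        have : c • m ∈ N := Submodule.smul_mem_smul hc trivial
        rwa [← Submodule.Quotient.mk_eq_zero N] at this
    have hfinN : Module.Finite R ↥N := Module.Finite.iff_fg.mpr (IsNoetherian.noetherian N)
    have hart1 : IsArtinian R ↥N := by
      refine ih ↥N ?_
      have hinj : Function.Injective N.subtype := N.injective_subtype
      apply Submodule.map_injective_of_injective hinj
      rw [Submodule.map_smul'', Submodule.map_top, Submodule.range_subtype, Submodule.map_bot]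
      rw [hNdef, ← Submodule.smul_assoc, Ideal.smul_eq_mul, ← pow_succ]
      exact h
    exact (isArtinian_iff_submodule_quotient N).mpr ⟨hart1, hart2⟩

theorem artinianRing_of_T [IsNoetherianRing R] [IsLocalRing R]
    (hT : ∀ I : Ideal R, (⨆ f : I →ₗ[R] R, LinearMap.range f) = I) : IsArtinianRing R := by
  obtain ⟨k, hk⟩ := max_pow_eq_bot hT
  have hsmul : ((maximalIdeal R) ^ k) • (⊤ : Submodule R R) = ⊥ := by
    rw [Ideal.smul_eq_mul, Ideal.mul_top, hk]
  exact isArtinian_of_pow_smul k R hsmul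

end Ring


section Main

open IsLocalRing

variable {R : Type u} [CommRing R] [IsLocalRing R]

/-- Submodules of a cyclic module killed by the maximal ideal are `⊥` or `⊤`. -/
theorem span_bot_or_top {M : Type u} [AddCommGroup M] [Module R M]
    (x : M) (hx : ∀ c ∈ maximalIdeal R, c • x = 0) :
    ∀ N : Submodule R ↥(R ∙ x), N = ⊥ ∨ N = ⊤ := by
  intro N
  rcases eq_or_ne N ⊥ with h | h
  · exact Or.inl h
  right
  obtain ⟨w, hwN, hw0⟩ := Submodule.exists_mem_ne_zero_of_ne_bot h
  obtain ⟨r, hr⟩ := Submodule.mem_span_singleton.mp w.2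
  have hru : IsUnit r := by
    by_contra hnr
    refine hw0 (Subtype.ext ?_)
    show (↑w : M) = 0
    rw [← hr, hx r ((IsLocalRing.mem_maximalIdeal r).mpr hnr)]
  obtain ⟨u, rfl⟩ := hru
  rw [eq_top_iff]
  intro v _
  obtain ⟨s, hs⟩ := Submodule.mem_span_singleton.mp v.2
  have hv : v = (s * ↑u⁻¹) • w := by
    apply Subtype.ext
    show (↑v : M) = (s * ↑u⁻¹) • (↑w : M)
    rw [← hs, ← hr, smul_smul, mul_assoc, Units.inv_mul, mul_one]
  rw [hv]
  exact N.smul_mem _ hwN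

theorem homNoethArt [IsNoetherianRing R] [IsArtinianRing R] (M : Type u) [AddCommGroup M]
    [Module R M] [Module.Finite R M] :
    IsNoetherian R (M →ₗ[R] R) ∧ IsArtinian R (M →ₗ[R] R) := by
  classical
  obtain ⟨s, hs⟩ := Module.Finite.fg_top (R := R) (M := M)
  let Φ : (M →ₗ[R] R) →ₗ[R] ((↑s : Set M) → R) :=
    LinearMap.pi (fun i => LinearMap.applyₗ (i : M))
  have hker : ∀ f : M →ₗ[R] R, (∀ x ∈ (↑s : Set M), f x = 0) → f = 0 := by
    intro f hf
    apply LinearMap.ext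
    intro x
    have hx : x ∈ Submodule.span R (↑s : Set M) := by rw [hs]; trivial
    induction hx using Submodule.span_induction with
    | mem z hz => exact hf z hz
    | zero => simp
    | add a b _ _ ha hb => simp [ha, hb]
    | smul r a _ ha => simp [ha]
  have hinj : Function.Injective Φ := by
    intro f g hfg
    have : f - g = 0 := by
      refine hker _ (fun x hx => ?_)
      have h := congrFun hfg ⟨x, hx⟩
      have h' : f x = g x := h
      simp [h']
    rwa [sub_eq_zero] at this
  exact ⟨isNoetherian_of_injective Φ hinj, isArtinian_of_injective Φ hinj⟩

theorem flen_hom_le [IsNoetherianRing R] [IsArtinianRing R]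
    {y : R} (hy : Ideal.torsionOf R R y = maximalIdeal R)
    (hsoc : (maximalIdeal R : Submodule R R).annihilator ≤ Ideal.span {y}) :
    ∀ (n : ℕ) (M : Type u) [AddCommGroup M] [Module R M] [Module.Finite R M],
      flen R M ≤ n → flen R (M →ₗ[R] R) ≤ flen R M := by
  have hyne : y ≠ 0 := by
    intro h0
    have htop : Ideal.torsionOf R R y = ⊤ := by
      rw [h0]
      ext r
      simp [Ideal.mem_torsionOf_iff]
    rw [hy] at htop
    exact (IsLocalRing.maximalIdeal.isMaximal R).ne_top htop
  have hykill : ∀ c ∈ maximalIdeal R, c • y = 0 := by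
    intro c hc
    rw [← hy] at hc
    exact (Ideal.mem_torsionOf_iff y c).mp hc
  have hspany1 : flen R ↥(Ideal.span ({y} : Set R)) = 1 := by
    refine flen_eq_one R ⟨⟨y, Ideal.subset_span rfl⟩, fun h0 => hyne ?_⟩
      (span_bot_or_top y hykill)
    exact congrArg Subtype.val h0
  intro n
  induction n with
  | zero =>
    intro M _ _ _ hflen
    have hsub := subsingleton_of_flen_eq_zero R (Nat.le_zero.mp hflen)
    haveI := (homNoethArt (R := R) M).1
    haveI := (homNoethArt (R := R) M).2
    have : Subsingleton (M →ₗ[R] R) :=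
      ⟨fun f g => LinearMap.ext fun x => by rw [Subsingleton.elim x (0 : M)]; simp⟩
    rw [flen_eq_zero_of_subsingleton R this]
    omega
  | succ n ih =>
    intro M _ _ _ hflen
    haveI hMn : IsNoetherian R M := isNoetherian_of_isNoetherianRing_of_finite R M
    haveI := (homNoethArt (R := R) M).1
    haveI := (homNoethArt (R := R) M).2
    rcases subsingleton_or_nontrivial M with hsub | hnt
    · have : Subsingleton (M →ₗ[R] R) :=
        ⟨fun f g => LinearMap.ext fun x => by rw [Subsingleton.elim x (0 : M)]; simp⟩
      rw [flen_eq_zero_of_subsingleton R this]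
      omega
    haveI : IsAtomic (Submodule R M) :=
      isAtomic_of_orderBot_wellFounded_lt (IsWellFounded.wf)
    rcases eq_bot_or_exists_atom_le (⊤ : Submodule R M) with htop | ⟨S, hS, -⟩
    · exfalso
      obtain ⟨x, hx⟩ := exists_ne (0 : M)
      have : x ∈ (⊥ : Submodule R M) := by rw [← htop]; trivial
      exact hx (by simpa using this)
    haveI : Module.Finite R ↥S := Module.Finite.iff_fg.mpr (IsNoetherian.noetherian S)
    have hSsub : ∀ N : Submodule R ↥S, N = ⊥ ∨ N = ⊤ := by
      intro N
      have hmaple : N.map S.subtype ≤ S := Submodule.map_subtype_le S N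
      have hinj : Function.Injective S.subtype := S.injective_subtype
      rcases lt_or_eq_of_le hmaple with hlt | heq
      · left
        have := hS.2 _ hlt
        apply Submodule.map_injective_of_injective hinj
        rw [this, Submodule.map_bot]
      · right
        apply Submodule.map_injective_of_injective hinj
        rw [heq, Submodule.map_subtype_top]
    have hSex : ∃ zz : ↥S, zz ≠ 0 := by
      obtain ⟨z, hzS, hz0⟩ := Submodule.exists_mem_ne_zero_of_ne_bot hS.1
      exact ⟨⟨z, hzS⟩, fun h => hz0 (congrArg Subtype.val h)⟩
    have hflenS : flen R ↥S = 1 := flen_eq_one R hSex hSsub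
    have hadd := flen_add R S
    have hQle : flen R (M ⧸ S) ≤ n := by omega
    haveI := (homNoethArt (R := R) (M ⧸ S)).1
    haveI := (homNoethArt (R := R) (M ⧸ S)).2
    haveI := (homNoethArt (R := R) ↥S).1
    haveI := (homNoethArt (R := R) ↥S).2
    have ihQ := ih (M ⧸ S) hQle
    let ρ : (M →ₗ[R] R) →ₗ[R] (↥S →ₗ[R] R) := LinearMap.domRestrict' S
    let Φ : ((M ⧸ S) →ₗ[R] R) →ₗ[R] (M →ₗ[R] R) := LinearMap.lcomp R R S.mkQ
    have hΦinj : Function.Injective Φ := by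
      intro g g' hgg
      ext q
      exact LinearMap.congr_fun hgg q
    have hrange : LinearMap.range Φ = LinearMap.ker ρ := by
      ext f
      constructor
      · rintro ⟨g, rfl⟩
        rw [LinearMap.mem_ker]
        ext z
        show g (S.mkQ ↑z) = 0
        have : S.mkQ ↑z = 0 := by
          rw [Submodule.mkQ_apply]
          exact (Submodule.Quotient.mk_eq_zero S).mpr z.2
        rw [this, map_zero]
      · intro hf
        have hle : S ≤ LinearMap.ker f := by
          intro z hz
          have := LinearMap.congr_fun (LinearMap.mem_ker.mp hf) ⟨z, hz⟩
          simpa [ρ] using this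
        refine ⟨S.liftQ f hle, ?_⟩
        ext m
        show (S.liftQ f hle) (S.mkQ m) = f m
        rw [Submodule.mkQ_apply, Submodule.liftQ_apply]
    have h1 : flen R (M →ₗ[R] R)
        = flen R ↥(LinearMap.ker ρ) + flen R ↥(LinearMap.range ρ) := by
      rw [flen_add R (LinearMap.ker ρ)]
      congr 1
      exact flen_congr R (LinearMap.quotKerEquivRange ρ)
    have h2 : flen R ↥(LinearMap.ker ρ) ≤ flen R (M ⧸ S) := by
      have heq : flen R ((M ⧸ S) →ₗ[R] R) = flen R ↥(LinearMap.ker ρ) :=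
        flen_congr R ((LinearEquiv.ofInjective Φ hΦinj).trans (LinearEquiv.ofEq _ _ hrange))
      omega
    have h3 : flen R ↥(LinearMap.range ρ) ≤ 1 := by
      obtain ⟨z, hzS, hz0⟩ := Submodule.exists_mem_ne_zero_of_ne_bot hS.1
      have hzspan : (R ∙ z) = S := by
        have hle : (R ∙ z) ≤ S := by
          rw [Submodule.span_le, Set.singleton_subset_iff]
          exact hzS
        rcases lt_or_eq_of_le hle with hlt | heq
        · exfalso
          have := hS.2 _ hlt
          apply hz0
          have hmem := Submodule.mem_span_singleton_self (R := R) z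
          rw [this] at hmem
          simpa using hmem
        · exact heq
      have hzkill : ∀ c ∈ maximalIdeal R, c • z = 0 := by
        intro c hc
        by_contra hne
        have h1' : (R ∙ (c • z)) ≤ S := by
          rw [Submodule.span_le, Set.singleton_subset_iff]
          exact S.smul_mem c hzS
        have h2' : (R ∙ (c • z)) ≠ ⊥ := by
          rw [Ne, Submodule.span_singleton_eq_bot]
          exact hne
        rcases lt_or_eq_of_le h1' with hlt | heq
        · exact h2' (hS.2 _ hlt)
        · have hzmem : z ∈ (R ∙ (c • z)) := by rw [heq]; exact hzS
          obtain ⟨t, ht⟩ := Submodule.mem_span_singleton.mp hzmem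
          rw [smul_smul] at ht
          have hzero : (1 - t * c) • z = 0 := by
            rw [sub_smul, one_smul, ht, sub_self]
          have hu : IsUnit (1 - t * c) :=
            IsLocalRing.isUnit_one_sub_self_of_mem_nonunits _
              ((IsLocalRing.mem_maximalIdeal _).mp (Ideal.mul_mem_left _ t hc))
          obtain ⟨u, hu⟩ := hu
          apply hz0
          have h0 : (↑u : R) • z = 0 := by rw [hu]; exact hzero
          calc z = (↑u⁻¹ : R) • ((↑u : R) • z) := by
                rw [smul_smul, Units.inv_mul, one_smul]
            _ = 0 := by rw [h0, smul_zero]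
      let e : (↥S →ₗ[R] R) →ₗ[R] R := LinearMap.applyₗ (⟨z, hzS⟩ : ↥S)
      have herange : ∀ f : ↥S →ₗ[R] R, e f ∈ Ideal.span ({y} : Set R) := by
        intro f
        apply hsoc
        rw [Submodule.mem_annihilator]
        intro c hc
        have hcz : c • (⟨z, hzS⟩ : ↥S) = 0 := Subtype.ext (hzkill c hc)
        show f ⟨z, hzS⟩ • c = 0
        rw [smul_eq_mul, mul_comm, ← smul_eq_mul, ← map_smul, hcz, map_zero]
      let e' : (↥S →ₗ[R] R) →ₗ[R] ↥(Ideal.span ({y} : Set R)) :=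
        LinearMap.codRestrict (Ideal.span ({y} : Set R)) e herange
      have he'inj : Function.Injective e' := by
        intro f g hfg
        have hfg' : e f = e g := congrArg Subtype.val hfg
        ext w
        obtain ⟨r, hr⟩ := Submodule.mem_span_singleton.mp
          (show (↑w : M) ∈ R ∙ z by rw [hzspan]; exact w.2)
        have hw : w = r • (⟨z, hzS⟩ : ↥S) := by
          apply Subtype.ext
          rw [← hr]
          rfl
        rw [hw, map_smul, map_smul]
        show r • e f = r • e g
        rw [hfg']
      have hle1 : flen R ↥(LinearMap.range ρ) ≤ flen R (↥S →ₗ[R] R) :=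
        flen_submodule_le R _
      have hle2 : flen R (↥S →ₗ[R] R) ≤ flen R ↥(Ideal.span ({y} : Set R)) :=
        flen_le_of_injective R e' he'inj
      omega
    omega

end Main


section Final

open IsLocalRing

variable {R : Type u} [CommRing R] [IsLocalRing R] [IsNoetherianRing R]

theorem exists_socle_gen
    (hT : ∀ I : Ideal R, (⨆ f : I →ₗ[R] R, LinearMap.range f) = I) :
    ∃ y : R, Ideal.torsionOf R R y = maximalIdeal R ∧
      (maximalIdeal R : Submodule R R).annihilator ≤ Ideal.span {y} := by
  by_cases hm : maximalIdeal R = ⊥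
  · refine ⟨1, ?_, ?_⟩
    · rw [hm]
      ext r
      simp [Ideal.mem_torsionOf_iff]
    · rw [Ideal.span_singleton_one]
      exact le_top
  · obtain ⟨k, hk⟩ := max_pow_eq_bot hT
    classical
    have hex : ∃ n, (maximalIdeal R) ^ n = ⊥ := ⟨k, hk⟩
    have hnspec : (maximalIdeal R) ^ (Nat.find hex) = ⊥ := Nat.find_spec hex
    have hn0 : Nat.find hex ≠ 0 := by
      intro h0
      rw [h0, pow_zero, Ideal.one_eq_top] at hnspec
      have h1 : (1 : R) ∈ (⊥ : Ideal R) := by rw [← hnspec]; trivial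
      simpa using h1
    obtain ⟨n', hn'⟩ : ∃ n', Nat.find hex = n' + 1 := ⟨Nat.find hex - 1, by omega⟩
    have hprev : (maximalIdeal R) ^ n' ≠ ⊥ := Nat.find_min hex (by omega)
    obtain ⟨z, hzmem, hz0⟩ := Submodule.exists_mem_ne_zero_of_ne_bot hprev
    have htors : Ideal.torsionOf R R z = maximalIdeal R := by
      have hle : maximalIdeal R ≤ Ideal.torsionOf R R z := by
        intro c hc
        refine (Ideal.mem_torsionOf_iff z c).mpr ?_
        show c • z = 0
        rw [smul_eq_mul]
        have hmem : z * c ∈ (maximalIdeal R) ^ (n' + 1) := by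
          rw [pow_succ]
          exact Ideal.mul_mem_mul hzmem hc
        rw [← hn', hnspec] at hmem
        rw [mul_comm]
        simpa using hmem
      have hne : Ideal.torsionOf R R z ≠ ⊤ := by
        intro h
        apply hz0
        have h1 : (1 : R) ∈ Ideal.torsionOf R R z := by rw [h]; trivial
        simpa using (Ideal.mem_torsionOf_iff z 1).mp h1
      exact ((IsLocalRing.maximalIdeal.isMaximal R).eq_of_le hne hle).symm
    refine ⟨z, htors, ?_⟩
    intro a ha
    refine mem_span_of_ann_le hT z a (fun r hr => ?_)
    have hrm : r ∈ maximalIdeal R := by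
      rw [← htors]
      exact (Ideal.mem_torsionOf_iff z r).mpr (by simpa [smul_eq_mul] using hr)
    have := Submodule.mem_annihilator.mp ha r hrm
    simpa [smul_eq_mul, mul_comm] using this

theorem hom_is_mul [IsArtinianRing R]
    (hT : ∀ I : Ideal R, (⨆ f : I →ₗ[R] R, LinearMap.range f) = I)
    (I : Ideal R) (f : ↥I →ₗ[R] R) : ∃ r : R, ∀ x : ↥I, f x = r * ↑x := by
  obtain ⟨y, hy, hsoc⟩ := exists_socle_gen hT
  haveI : Module.Finite R ↥I := Module.Finite.iff_fg.mpr (IsNoetherian.noetherian I)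
  haveI := (homNoethArt (R := R) ↥I).1
  haveI := (homNoethArt (R := R) ↥I).2
  haveI := (homNoethArt (R := R) (R ⧸ I)).1
  haveI := (homNoethArt (R := R) (R ⧸ I)).2
  set K : Ideal R := (I : Submodule R R).annihilator with hK
  let q1 : R ⧸ I := Submodule.Quotient.mk 1
  let Ψ : ((R ⧸ I) →ₗ[R] R) →ₗ[R] R := LinearMap.applyₗ q1
  have hmk : ∀ m : R, Submodule.Quotient.mk (p := I) m = m • q1 := by
    intro m
    show _ = m • Submodule.Quotient.mk (1 : R)
    rw [← Submodule.Quotient.mk_smul, smul_eq_mul, mul_one]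
  have hΨinj : Function.Injective Ψ := by
    intro g g' hgg
    apply LinearMap.ext
    intro mq
    obtain ⟨m, rfl⟩ := Submodule.Quotient.mk_surjective I mq
    rw [hmk m, map_smul, map_smul]
    show m • Ψ g = m • Ψ g'
    rw [hgg]
  have hΨrange : LinearMap.range Ψ = K := by
    ext a
    constructor
    · rintro ⟨g, rfl⟩
      rw [hK, Submodule.mem_annihilator]
      intro b hb
      have hmkb : (b : R) • q1 = 0 := by
        rw [← hmk b]
        exact (Submodule.Quotient.mk_eq_zero I).mpr hb
      calc Ψ g • b = b • Ψ g := by rw [smul_eq_mul, smul_eq_mul, mul_comm]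
        _ = g (b • q1) := (map_smul g b q1).symm
        _ = 0 := by rw [hmkb, map_zero]
    · intro ha
      have hle : I ≤ LinearMap.ker (LinearMap.toSpanSingleton R R a) := by
        intro r hr
        simp only [LinearMap.mem_ker, LinearMap.toSpanSingleton_apply, smul_eq_mul]
        have := Submodule.mem_annihilator.mp ha r hr
        simpa [smul_eq_mul, mul_comm] using this
      refine ⟨Submodule.liftQ I (LinearMap.toSpanSingleton R R a) hle, ?_⟩
      show Submodule.liftQ I (LinearMap.toSpanSingleton R R a) hle q1 = a
      have : Submodule.liftQ I (LinearMap.toSpanSingleton R R a) hle q1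
          = (LinearMap.toSpanSingleton R R a) 1 := Submodule.liftQ_apply _ _ _
      rw [this]
      simp
  have hKlen : flen R ↥K ≤ flen R (R ⧸ I) := by
    have heq : flen R ((R ⧸ I) →ₗ[R] R) = flen R ↥K :=
      flen_congr R ((LinearEquiv.ofInjective Ψ hΨinj).trans (LinearEquiv.ofEq _ _ hΨrange))
    have := flen_hom_le hy hsoc (flen R (R ⧸ I)) (R ⧸ I) le_rfl
    omega
  have hIhom : flen R (↥I →ₗ[R] R) ≤ flen R ↥I :=
    flen_hom_le hy hsoc (flen R ↥I) ↥I le_rfl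
  let ev : R →ₗ[R] (↥I →ₗ[R] R) := LinearMap.toSpanSingleton R (↥I →ₗ[R] R) I.subtype
  have hker : LinearMap.ker ev = K := by
    ext r
    constructor
    · intro hr
      rw [hK, Submodule.mem_annihilator]
      intro b hb
      have := LinearMap.congr_fun (LinearMap.mem_ker.mp hr) ⟨b, hb⟩
      simpa [ev, smul_eq_mul] using this
    · intro hr
      rw [LinearMap.mem_ker]
      ext b
      have := Submodule.mem_annihilator.mp hr ↑b b.2
      simpa [ev, smul_eq_mul] using this
  have hsplit : flen R R = flen R ↥K + flen R ↥(LinearMap.range ev) := by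
    have h1 := flen_add R (LinearMap.ker ev)
    have h2 : flen R (R ⧸ LinearMap.ker ev) = flen R ↥(LinearMap.range ev) :=
      flen_congr R (LinearMap.quotKerEquivRange ev)
    have h3 : flen R ↥(LinearMap.ker ev) = flen R ↥K := by rw [hker]
    omega
  have hIadd := flen_add R (I : Submodule R R)
  have hfin : flen R (↥I →ₗ[R] R) ≤ flen R ↥(LinearMap.range ev) := by omega
  have htop : LinearMap.range ev = ⊤ := eq_top_of_flen_le R _ hfin
  have hfmem : f ∈ LinearMap.range ev := by rw [htop]; trivial
  obtain ⟨r, hr⟩ := hfmem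
  refine ⟨r, fun x => ?_⟩
  have := LinearMap.congr_fun hr x
  rw [← this]
  show (r • I.subtype) x = r * ↑x
  simp [smul_eq_mul]

end Final

end LindoAux

/-- Folgerung 1.14 (Lindo): `R` is excellent as a module over itself, i.e. `γ_I(R) = I` for
every ideal `I`, iff `R` is a quasi-Frobenius ring (artinian and self-injective). -/
theorem self_excellent_iff_quasiFrobenius
    {R : Type u} [CommRing R] [IsNoetherianRing R] [IsLocalRing R] :
    (∀ I : Ideal R, (⨆ f : I →ₗ[R] R, LinearMap.range f) = I) ↔
      (IsArtinianRing R ∧ Module.Injective R R) := by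
  constructor
  · intro hT
    haveI hart : IsArtinianRing R := LindoAux.artinianRing_of_T hT
    refine ⟨hart, ?_⟩
    refine Module.Baer.injective ?_
    intro I g
    obtain ⟨r, hr⟩ := LindoAux.hom_is_mul hT I g
    refine ⟨r • (LinearMap.id : R →ₗ[R] R), fun x hx => ?_⟩
    rw [hr ⟨x, hx⟩]
    simp [smul_eq_mul]
  · rintro ⟨-, hinj⟩
    intro I
    apply le_antisymm
    · refine iSup_le fun f => ?_
      obtain ⟨h, hh⟩ := hinj.out I.subtype (Submodule.injective_subtype I) f
      rintro a ⟨x, rfl⟩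
      rw [← hh x]
      show h (↑x : R) ∈ I
      have hx1 : h ↑x = (↑x : R) * h 1 := by
        conv_lhs => rw [show (↑x : R) = (↑x : R) • (1 : R) by simp]
        rw [map_smul, smul_eq_mul]
      rw [hx1]
      exact I.mul_mem_right _ x.2
    · conv_lhs => rw [← Submodule.range_subtype I]
      exact le_iSup (fun f : ↥I →ₗ[R] R => LinearMap.range f) I.subtype
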